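/- Consider the iteration x_{k+1} chosen so that F(x_{k+1}) ≤ F(x̄_{k+1}) where F(x̄_{k+1}) ≤ (1-γ_k)F(x_k) + γ_k F* + δ_{k+1}, with γ_k = a_{k+1}/A_{k+1}, A_k = ∑_{i=1}^k a_i (a_i > 0), A_0 = 0. Then for all k ≥ 0: A_k F(x_k) ≤ A_k F* + ∑_{i=1}^k A_i δ_i. -/

import Mathlib

theorem stmt_13 {X : Type*} (F : X → ℝ) (Fstar : ℝ) (x xbar : ℕ → X)
    (a δ A γ : ℕ → ℝ)
    (ha : ∀ i, 1 ≤ i → 0 < a i) (hδ : ∀ i, 0 ≤ δ i)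
    (hA : ∀ k, A k = ∑ i ∈ Finset.Icc 1 k, a i)
    (hγ : ∀ k, γ k = a (k + 1) / A (k + 1))
    (hmono : ∀ k, F (x (k + 1)) ≤ F (xbar (k + 1)))
    (hstep : ∀ k, F (xbar (k + 1)) ≤ (1 - γ k) * F (x k) + γ k * Fstar + δ (k + 1)) :
    ∀ k, A k * F (x k) ≤ A k * Fstar + ∑ i ∈ Finset.Icc 1 k, A i * δ i := by
  have hApos : ∀ k, 1 ≤ k → 0 < A k := by
    intro k hk
    rw [hA]
    apply Finset.sum_pos
    · intro i hi; exact ha i (Finset.mem_Icc.mp hi).1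
    · exact ⟨1, Finset.mem_Icc.mpr ⟨le_refl 1, hk⟩⟩
  have hAsucc : ∀ k, A (k + 1) = A k + a (k + 1) := by
    intro k
    rw [hA, hA, Finset.sum_Icc_succ_top (Nat.le_add_left 1 k)]
  intro k
  induction k with
  | zero =>
    have : A 0 = 0 := by rw [hA]; simp
    simp [this]
  | succ k ih =>
    have hpos : 0 < A (k + 1) := hApos (k + 1) (Nat.le_add_left 1 k)
    have h1 : F (x (k + 1)) ≤ (1 - γ k) * F (x k) + γ k * Fstar + δ (k + 1) :=
      (hmono k).trans (hstep k)
    have h2 : A (k + 1) * F (x (k + 1)) ≤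
        A (k + 1) * ((1 - γ k) * F (x k) + γ k * Fstar + δ (k + 1)) :=
      mul_le_mul_of_nonneg_left h1 hpos.le
    have hg : A (k + 1) * γ k = a (k + 1) := by
      rw [hγ]; field_simp
    have h3 : A (k + 1) * ((1 - γ k) * F (x k) + γ k * Fstar + δ (k + 1)) =
        A k * F (x k) + a (k + 1) * Fstar + A (k + 1) * δ (k + 1) := by
      have : A (k + 1) * (1 - γ k) = A k := by
        rw [mul_sub, mul_one, hg, hAsucc]; ring
      rw [mul_add, mul_add, ← mul_assoc, ← mul_assoc, this, hg]
    rw [Finset.sum_Icc_succ_top (Nat.le_add_left 1 k)]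
    calc A (k + 1) * F (x (k + 1)) ≤ A k * F (x k) + a (k + 1) * Fstar + A (k + 1) * δ (k + 1) := by
          rw [← h3]; exact h2
      _ ≤ (A k * Fstar + ∑ i ∈ Finset.Icc 1 k, A i * δ i) + a (k + 1) * Fstar + A (k + 1) * δ (k + 1) := by
          linarith
      _ = A (k + 1) * Fstar + ((∑ i ∈ Finset.Icc 1 k, A i * δ i) + A (k + 1) * δ (k + 1)) := by
          rw [hAsucc]; ring
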